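/- Let n ≥ 5 and let W_n be the wheel graph on n vertices. Then T_1(W_n) = 2 and B_1(W_n) = 1; that is, the minimum number of tile types over all pots realizing W_n is 2, and the minimum number of bond-edge types over all pots realizing W_n is 1. -/

import Mathlib

/-!
Basic framework for flexible-tile DNA self-assembly.

Bond-edge types are elements of `Fin m`.  A cohesive end is either unhatted
(`Sum.inl a`) or hatted (`Sum.inr a`).  A tile is a finite multiset of cohesive
ends, and a pot is a finite set of tiles.
-/

/-- A tile over the bond-edge alphabet `Fin m`. -/
abbrev Tile (m : ℕ) : Type := Multiset (Fin m ⊕ Fin m)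

/-- A pot: a finite set of tiles over the alphabet `Fin m`. -/
abbrev Pot (m : ℕ) : Type := Finset (Tile m)

/-- A finite multigraph (nonempty finite vertex set, finite edge set; loops and
parallel edges allowed), edges recorded by their unordered pair of endpoints. -/
structure Multigraph where
  V : Type
  E : Type
  [fintypeV : Fintype V]
  [decEqV : DecidableEq V]
  [nonemptyV : Nonempty V]
  [fintypeE : Fintype E]
  ends : E → Sym2 V

attribute [instance] Multigraph.fintypeV Multigraph.decEqV
  Multigraph.nonemptyV Multigraph.fintypeE

/-- The order (number of vertices) of a multigraph. -/
def Multigraph.order (G : Multigraph) : ℕ := Fintype.card G.V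

/-- An assembly of `G` from tiles over `Fin m`: each edge gets an orientation
(an ordered pair of vertices compatible with its endpoints) and a bond-edge type. -/
structure Assembly (m : ℕ) (G : Multigraph) where
  orient : G.E → G.V × G.V
  label : G.E → Fin m
  orient_ends : ∀ e : G.E, G.ends e = s((orient e).1, (orient e).2)

/-- The tile of a vertex `v` under an assembly: one unhatted `a` for each edge
labeled `a` oriented out of `v`, one hatted `a` for each edge labeled `a`
oriented into `v`. -/
def Assembly.tileOf {m : ℕ} {G : Multigraph} (A : Assembly m G) (v : G.V) : Tile m :=
  (Finset.univ : Finset G.E).val.bind fun e =>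
    (if (A.orient e).1 = v then {Sum.inl (A.label e)} else 0) +
    (if (A.orient e).2 = v then {Sum.inr (A.label e)} else 0)

/-- `G` is realized by the pot `P`: there is an assembly of `G` all of whose
vertex tiles belong to `P`. -/
def Realizes {m : ℕ} (P : Pot m) (G : Multigraph) : Prop :=
  ∃ A : Assembly m G, ∀ v : G.V, A.tileOf v ∈ P

/-- `C(P)`: the class of multigraphs realized by `P`. -/
def CSet {m : ℕ} (P : Pot m) : Set Multigraph := {G | Realizes P G}

/-- `m_P`: the minimum order of a multigraph realized by `P`. -/
noncomputable def mP {m : ℕ} (P : Pot m) : ℕ :=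
  sInf {n | ∃ G ∈ CSet P, G.order = n}

/-- `C_min(P)`: the multigraphs realized by `P` of minimum order. -/
def Cmin {m : ℕ} (P : Pot m) : Set Multigraph :=
  {G ∈ CSet P | G.order = mP P}

/-- An isomorphism of multigraphs. -/
structure MultigraphIso (G H : Multigraph) where
  vEquiv : G.V ≃ H.V
  eEquiv : G.E ≃ H.E
  ends_eq : ∀ e : G.E, H.ends (eEquiv e) = (G.ends e).map vEquiv

/-- Two multigraphs are isomorphic. -/
def Isomorphic (G H : Multigraph) : Prop := Nonempty (MultigraphIso G H)

/-- Scenario 1: minimum number of tile types over all pots realizing `G`. -/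
noncomputable def T1 (G : Multigraph) : ℕ :=
  sInf {c | ∃ m : ℕ, ∃ P : Pot m, Realizes P G ∧ P.card = c}

/-- Scenario 1: minimum number of bond-edge types over all pots realizing `G`. -/
noncomputable def B1 (G : Multigraph) : ℕ :=
  sInf {m | ∃ P : Pot m, Realizes P G}

/-- Scenario 2: minimum number of tile types over pots `P` with `G ∈ C(P)` and
`m_P = |V(G)|`. -/
noncomputable def T2 (G : Multigraph) : ℕ :=
  sInf {c | ∃ m : ℕ, ∃ P : Pot m, Realizes P G ∧ mP P = G.order ∧ P.card = c}

/-- Scenario 2: minimum number of bond-edge types over pots `P` with `G ∈ C(P)`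
and `m_P = |V(G)|`. -/
noncomputable def B2 (G : Multigraph) : ℕ :=
  sInf {m | ∃ P : Pot m, Realizes P G ∧ mP P = G.order}

/-- Scenario 3: minimum number of tile types over pots `P` with `C_min(P)`
consisting exactly of the multigraphs isomorphic to `G`. -/
noncomputable def T3 (G : Multigraph) : ℕ :=
  sInf {c | ∃ m : ℕ, ∃ P : Pot m, Cmin P = {H | Isomorphic H G} ∧ P.card = c}

/-- Scenario 3: minimum number of bond-edge types over pots `P` with `C_min(P)`
consisting exactly of the multigraphs isomorphic to `G`. -/
noncomputable def B3 (G : Multigraph) : ℕ :=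
  sInf {m | ∃ P : Pot m, Cmin P = {H | Isomorphic H G}}

/-- The degree of a vertex (a loop contributes 2). -/
def Multigraph.degree (G : Multigraph) (v : G.V) : ℕ :=
  ∑ e : G.E, (if v ∈ G.ends e then (if (G.ends e).IsDiag then 2 else 1) else 0)

/-- `av(G)`: the number of distinct vertex degrees in `G`. -/
def av (G : Multigraph) : ℕ := (Finset.univ.image G.degree).card

/-- `ev(G)`: the number of distinct even vertex degrees in `G`. -/
def ev (G : Multigraph) : ℕ :=
  ((Finset.univ.image G.degree).filter (fun d => Even d)).card

/-- `ov(G)`: the number of distinct odd vertex degrees in `G`. -/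
def ov (G : Multigraph) : ℕ :=
  ((Finset.univ.image G.degree).filter (fun d => Odd d)).card

/-- `z i t`: the net number of cohesive ends of type `i` on tile `t`
(unhatted count minus hatted count). -/
def zval {m : ℕ} (i : Fin m) (t : Tile m) : ℤ :=
  (t.count (Sum.inl i) : ℤ) - (t.count (Sum.inr i) : ℤ)

/-- The wheel graph on `n` vertices: the hub is `none`; the outer-cycle
vertices are `some i` for `i : Fin (n-1)`.  Edge `Sum.inl i` is the spoke from
the hub to `some i`; edge `Sum.inr i` is the outer-cycle edge from `some i` to
`some ((i+1) mod (n-1))`. -/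
def wheel (n : ℕ) : Multigraph where
  V := Option (Fin (n - 1))
  E := Fin (n - 1) ⊕ Fin (n - 1)
  ends e :=
    match e with
    | Sum.inl i => s((none : Option (Fin (n - 1))), some i)
    | Sum.inr i => s(some i,
        some ⟨(i.val + 1) % (n - 1), Nat.mod_lt _ (by have := i.isLt; omega)⟩)

/-- The cycle graph on `n` vertices (vertices `none, some 0, …, some (n-2)`,
edge `k` joining the `k`-th and `(k+1 mod n)`-th vertices in this order). -/
def cycleVtx (n : ℕ) (k : Fin n) : Option (Fin (n - 1)) :=
  if h : k.val = 0 then none else some ⟨k.val - 1, by have := k.isLt; omega⟩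

def cycleGraph (n : ℕ) : Multigraph where
  V := Option (Fin (n - 1))
  E := Fin n
  ends k := s(cycleVtx n k,
    cycleVtx n ⟨(k.val + 1) % n, Nat.mod_lt _ (by have := k.isLt; omega)⟩)

/-! ### Auxiliary lemmas for `wheel_scenario1` -/

lemma card_tileOf {m : ℕ} {G : Multigraph} (A : Assembly m G) (v : G.V) :
    Multiset.card (A.tileOf v) =
      ∑ e : G.E, ((if (A.orient e).1 = v then 1 else 0) +
        (if (A.orient e).2 = v then 1 else 0)) := by
  rw [Assembly.tileOf, Multiset.card_bind, Finset.sum]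
  congr 1
  apply Multiset.map_congr rfl
  intro e _
  simp [apply_ite Multiset.card]

lemma count_tileOf {m : ℕ} {G : Multigraph} (A : Assembly m G) (v : G.V) (x : Fin m ⊕ Fin m) :
    (A.tileOf v).count x =
      ∑ e : G.E, (((if (A.orient e).1 = v then ({Sum.inl (A.label e)} : Tile m) else 0) +
        (if (A.orient e).2 = v then {Sum.inr (A.label e)} else 0)).count x) := by
  rw [Assembly.tileOf, Multiset.count_bind, Finset.sum]

lemma mk_succ_eq (k : ℕ) (i : Fin (k+4)) (h : (i.val+1) % (k+4) < k + 4) :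
    (⟨(i.val+1)%(k+4), h⟩ : Fin (k+4)) = i + 1 := by
  ext; simp [Fin.val_add]

lemma sum_succ_eq (k : ℕ) (j : Fin (k+4)) :
    ∑ i : Fin (k+4), (if i + 1 = j then (1:ℕ) else 0) = 1 := by
  simp only [← eq_sub_iff_add_eq]
  simp [Finset.sum_ite_eq']


lemma wheelE_sum {M : Type*} [AddCommMonoid M] (k : ℕ) (f : (wheel (k+5)).E → M) :
    ∑ e, f e = (∑ i : Fin (k+4), f (Sum.inl i)) + ∑ i : Fin (k+4), f (Sum.inr i) :=
  Fintype.sum_sum_type f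

instance wheelDecEqOpt (k : ℕ) (a : (wheel (k+5)).V) (b : Option (Fin (k+4))) : Decidable (a = b) :=
  (wheel (k+5)).decEqV a b

instance wheelDecEqOpt' (k : ℕ) (a : (wheel (k+5)).V) (b : Option (Fin (k+5-1))) : Decidable (a = b) :=
  (wheel (k+5)).decEqV a b

/-- The standard assembly of the wheel over one bond-edge type. -/
def wheelAssembly (k : ℕ) : Assembly 1 (wheel (k+5)) where
  orient e :=
    match e with
    | Sum.inl i => (none, some i)
    | Sum.inr i => (some i, some ⟨(i.val + 1) % (k+4), Nat.mod_lt _ (by omega)⟩)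
  label _ := 0
  orient_ends e := by cases e <;> rfl

lemma wheelAssembly_tileOf_none (k : ℕ) :
    (wheelAssembly k).tileOf none = Multiset.replicate (k+4) (Sum.inl (0 : Fin 1)) := by
  ext x
  rw [count_tileOf (wheelAssembly k) none]
  rw [wheelE_sum]
  rcases x with a | a <;> rw [Fin.fin_one_eq_zero a] <;>
    simp [wheelAssembly, Multiset.count_replicate, Multiset.count_singleton] <;>
    [exact (by simp : ∑ _i : Fin (k+4), Multiset.count (Sum.inl (0 : Fin 1)) ({Sum.inl 0} : Tile 1) =
        k + 1 + 1 + 1 + 1);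
      exact (by simp : ∀ _i : Fin (k+4), (Sum.inr (0 : Fin 1)) ∉ ({Sum.inl 0} : Tile 1))]

lemma wheelAssembly_tileOf_some (k : ℕ) (j : Fin (k+4)) :
    (wheelAssembly k).tileOf (some j) =
      ({Sum.inl 0, Sum.inr 0, Sum.inr 0} : Tile 1) := by
  ext x
  rw [count_tileOf (wheelAssembly k) (some j)]
  rw [wheelE_sum]
  have hsucc : ∀ i : Fin (k+4), ((wheelAssembly k).orient (Sum.inr i)).2 = some (i + 1) := by
    intro i; simp [wheelAssembly, mk_succ_eq]; rfl
  rcases x with a | a <;> rw [Fin.fin_one_eq_zero a]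
  · -- counting unhatted ends
    have h1 : ∀ i : Fin (k+4),
        (((if ((wheelAssembly k).orient (Sum.inl i)).1 = some j then
            ({Sum.inl ((wheelAssembly k).label (Sum.inl i))} : Tile 1) else 0) +
          (if ((wheelAssembly k).orient (Sum.inl i)).2 = some j then
            {Sum.inr ((wheelAssembly k).label (Sum.inl i))} else 0)).count (Sum.inl 0)) = 0 := by
      intro i; by_cases hij : i = j <;> simp [wheelAssembly, wheel, hij]
    have h2 : ∀ i : Fin (k+4),
        (((if ((wheelAssembly k).orient (Sum.inr i)).1 = some j then
            ({Sum.inl ((wheelAssembly k).label (Sum.inr i))} : Tile 1) else 0) +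
          (if ((wheelAssembly k).orient (Sum.inr i)).2 = some j then
            {Sum.inr ((wheelAssembly k).label (Sum.inr i))} else 0)).count (Sum.inl 0)) =
          (if i = j then 1 else 0) := by
      intro i
      rw [hsucc]
      by_cases hij : i = j <;> by_cases hij2 : i + 1 = j <;>
        simp [wheelAssembly, wheel, hij, hij2]
    rw [Finset.sum_congr rfl (fun i _ => h1 i), Finset.sum_congr rfl (fun i _ => h2 i)]
    simp [Finset.sum_ite_eq', Multiset.count_singleton]
  · -- counting hatted ends
    have h1 : ∀ i : Fin (k+4),
        (((if ((wheelAssembly k).orient (Sum.inl i)).1 = some j then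
            ({Sum.inl ((wheelAssembly k).label (Sum.inl i))} : Tile 1) else 0) +
          (if ((wheelAssembly k).orient (Sum.inl i)).2 = some j then
            {Sum.inr ((wheelAssembly k).label (Sum.inl i))} else 0)).count (Sum.inr 0)) =
          (if i = j then 1 else 0) := by
      intro i
      by_cases hij : i = j <;> simp [wheelAssembly, wheel, hij]
    have h2 : ∀ i : Fin (k+4),
        (((if ((wheelAssembly k).orient (Sum.inr i)).1 = some j then
            ({Sum.inl ((wheelAssembly k).label (Sum.inr i))} : Tile 1) else 0) +
          (if ((wheelAssembly k).orient (Sum.inr i)).2 = some j then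
            {Sum.inr ((wheelAssembly k).label (Sum.inr i))} else 0)).count (Sum.inr 0)) =
          (if i + 1 = j then 1 else 0) := by
      intro i
      rw [hsucc]
      by_cases hij : i = j <;> by_cases hij2 : i + 1 = j <;>
        simp [wheelAssembly, wheel, hij, hij2]
    rw [Finset.sum_congr rfl (fun i _ => h1 i), Finset.sum_congr rfl (fun i _ => h2 i)]
    rw [sum_succ_eq]
    simp [Finset.sum_ite_eq', Multiset.count_singleton]

lemma wheel_realizes (k : ℕ) :
    Realizes ({Multiset.replicate (k+4) (Sum.inl (0 : Fin 1)),
      ({Sum.inl 0, Sum.inr 0, Sum.inr 0} : Tile 1)} : Pot 1) (wheel (k+5)) := by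
  refine ⟨wheelAssembly k, ?_⟩
  intro v
  rcases v with _ | j
  · rw [wheelAssembly_tileOf_none]; exact Finset.mem_insert_self _ _
  · rw [wheelAssembly_tileOf_some]
    exact Finset.mem_insert_of_mem (Finset.mem_singleton_self _)

lemma card_tileOf_none {m k : ℕ} (A : Assembly m (wheel (k+5))) :
    Multiset.card (A.tileOf none) = k + 4 := by
  rw [card_tileOf A none, wheelE_sum]
  have h1 : ∀ i : Fin (k+4),
      ((if (A.orient (Sum.inl i)).1 = (none : Option (Fin (k+4))) then 1 else 0) +
        (if (A.orient (Sum.inl i)).2 = none then 1 else 0)) = 1 := by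
    intro i
    have h := A.orient_ends (Sum.inl i)
    rw [show (wheel (k+5)).ends (Sum.inl i) = s((none : Option (Fin (k+4))), some i) from rfl] at h
    rcases Sym2.eq_iff.mp h with ⟨ha, hb⟩ | ⟨ha, hb⟩ <;> simp [← ha, ← hb] <;> rfl
  have h2 : ∀ i : Fin (k+4),
      ((if (A.orient (Sum.inr i)).1 = (none : Option (Fin (k+4))) then 1 else 0) +
        (if (A.orient (Sum.inr i)).2 = none then 1 else 0)) = 0 := by
    intro i
    have h := A.orient_ends (Sum.inr i)
    rw [show (wheel (k+5)).ends (Sum.inr i) =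
      s((some i : Option (Fin (k+4))), some ⟨(i.val+1) % (k+4), Nat.mod_lt _ (by omega)⟩) from rfl] at h
    rcases Sym2.eq_iff.mp h with ⟨ha, hb⟩ | ⟨ha, hb⟩ <;> simp [← ha, ← hb]
  rw [Finset.sum_congr rfl (fun i _ => h1 i), Finset.sum_congr rfl (fun i _ => h2 i)]
  simp

lemma card_tileOf_some_zero {m k : ℕ} (A : Assembly m (wheel (k+5))) :
    Multiset.card (A.tileOf (some (0 : Fin (k+4)))) = 3 := by
  rw [card_tileOf A (some (0 : Fin (k+4))), wheelE_sum]
  have h1 : ∀ i : Fin (k+4),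
      ((if (A.orient (Sum.inl i)).1 = some (0 : Fin (k+4)) then 1 else 0) +
        (if (A.orient (Sum.inl i)).2 = some (0 : Fin (k+4)) then 1 else 0)) =
        (if i = 0 then 1 else 0) := by
    intro i
    have h := A.orient_ends (Sum.inl i)
    rw [show (wheel (k+5)).ends (Sum.inl i) = s((none : Option (Fin (k+4))), some i) from rfl] at h
    rcases Sym2.eq_iff.mp h with ⟨ha, hb⟩ | ⟨ha, hb⟩ <;> rw [← ha, ← hb] <;>
      by_cases hi : i = (0 : Fin (k+4)) <;> simp [wheel, hi]
  have h2 : ∀ i : Fin (k+4),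
      ((if (A.orient (Sum.inr i)).1 = some (0 : Fin (k+4)) then 1 else 0) +
        (if (A.orient (Sum.inr i)).2 = some (0 : Fin (k+4)) then 1 else 0)) =
        (if i = 0 then 1 else 0) + (if i + 1 = 0 then 1 else 0) := by
    intro i
    have h := A.orient_ends (Sum.inr i)
    rw [show (wheel (k+5)).ends (Sum.inr i) =
      s((some i : Option (Fin (k+4))), some ⟨(i.val+1) % (k+4), Nat.mod_lt _ (by omega)⟩) from rfl,
      mk_succ_eq] at h
    rcases Sym2.eq_iff.mp h with ⟨ha, hb⟩ | ⟨ha, hb⟩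
    · rw [← ha, ← hb]
      by_cases hi : i = (0 : Fin (k+4)) <;> by_cases hi2 : i + 1 = (0 : Fin (k+4)) <;>
        simp [wheel, hi, hi2]
    · rw [add_comm, ← ha, ← hb]
      by_cases hi : i = (0 : Fin (k+4)) <;> by_cases hi2 : i + 1 = (0 : Fin (k+4)) <;>
        simp [wheel, hi, hi2]
  rw [Finset.sum_congr rfl (fun i _ => h1 i), Finset.sum_congr rfl (fun i _ => h2 i),
    Finset.sum_add_distrib, sum_succ_eq]
  simp [Finset.sum_ite_eq']
/-- For `n ≥ 5`, the wheel graph `W_n` satisfies `T₁(W_n) = 2` and `B₁(W_n) = 1`. -/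
theorem wheel_scenario1 (n : ℕ) (hn : 5 ≤ n) :
    T1 (wheel n) = 2 ∧ B1 (wheel n) = 1 := by
  obtain ⟨k, rfl⟩ : ∃ k, n = k + 5 := ⟨n - 5, by omega⟩
  have hP := wheel_realizes k
  have hcard2 : ({Multiset.replicate (k+4) (Sum.inl (0 : Fin 1)),
      ({Sum.inl 0, Sum.inr 0, Sum.inr 0} : Tile 1)} : Pot 1).card = 2 := by
    rw [Finset.card_insert_of_notMem, Finset.card_singleton]
    intro hmem
    rw [Finset.mem_singleton] at hmem
    have := congrArg Multiset.card hmem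
    simp at this
  constructor
  · -- T1 = 2
    have h2 : 2 ∈ {c | ∃ m : ℕ, ∃ P : Pot m, Realizes P (wheel (k+5)) ∧ P.card = c} :=
      ⟨1, _, hP, hcard2⟩
    refine le_antisymm (Nat.sInf_le h2) (le_csInf ⟨2, h2⟩ ?_)
    rintro c ⟨m, P, ⟨A, hA⟩, rfl⟩
    by_contra hlt
    push_neg at hlt
    have hle : P.card ≤ 1 := by omega
    have heq : A.tileOf none = A.tileOf (some (0 : Fin (k+4))) :=
      Finset.card_le_one.mp hle _ (hA none) _ (hA (some (0 : Fin (k+4))))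
    have hcards := congrArg Multiset.card heq
    rw [card_tileOf_none, card_tileOf_some_zero] at hcards
    omega
  · -- B1 = 1
    have h1 : 1 ∈ {m | ∃ P : Pot m, Realizes P (wheel (k+5))} := ⟨_, hP⟩
    refine le_antisymm (Nat.sInf_le h1) (le_csInf ⟨1, h1⟩ ?_)
    rintro m ⟨P, A, -⟩
    rcases Nat.eq_zero_or_pos m with rfl | h
    · exact (A.label (Sum.inl (⟨0, by omega⟩ : Fin (k+4)))).elim0
    · exact h
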